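/- Let d ≥ 4 be even. If f ∈ ℂ[x_1,x_2] is a singular homogeneous polynomial of degree d such that H(f) = α·(x_1x_2)^{d−2} for some nonzero α ∈ ℂ, then f = a·x_1^{d/2}x_2^{d/2} for some nonzero constant a ∈ ℂ. -/

import Mathlib

section OneVar
open Polynomial

lemma poly_main (d : ℕ) (hd : 4 ≤ d) (F : ℂ[X]) (β : ℂ) (hβ : β ≠ 0)
    (hE : C (d:ℂ) * (F * derivative (derivative F))
        - C ((d:ℂ)-1) * (derivative F)^2 = C β * X ^ (d-2))
    (h0 : F.coeff 0 = 0) (h1 : F.coeff 1 = 0) :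
    ∃ a : ℂ, a ≠ 0 ∧ F = C a * X ^ (d / 2) := by
  have hF : F ≠ 0 := by
    rintro rfl
    apply hβ
    have h2 : (C β * (X:ℂ[X]) ^ (d-2)).coeff (d-2) = 0 := by
      rw [← hE]; simp
    simpa using h2
  obtain ⟨G, hFG, hGnd⟩ := F.exists_eq_pow_rootMultiplicity_mul_and_not_dvd hF 0
  rw [map_zero, sub_zero] at hFG hGnd
  have hG0 : G.eval 0 ≠ 0 := by
    rw [← coeff_zero_eq_eval_zero]; rwa [X_dvd_iff] at hGnd
  have hGne : G ≠ 0 := fun h => hG0 (by simp [h])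
  have hm2 : 2 ≤ rootMultiplicity 0 F := by
    rw [Polynomial.le_rootMultiplicity_iff hF, map_zero, sub_zero, X_pow_dvd_iff]
    intro i hi
    interval_cases i <;> assumption
  obtain ⟨e, he⟩ : ∃ e, rootMultiplicity 0 F = e + 2 := ⟨rootMultiplicity 0 F - 2, by omega⟩
  rw [he] at hFG
  clear hm2 he h0 h1 hGnd
  -- the quotient equation
  set G' := derivative G with hG'
  set G'' := derivative G' with hG''
  set P : ℂ[X] := C (d:ℂ) * G * (C (((e:ℂ)+2)*((e:ℂ)+1)) * G + C (2*((e:ℂ)+2)) * (X * G')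
      + X^2 * G'') - C ((d:ℂ)-1) * (C ((e:ℂ)+2) * G + X * G')^2 with hP
  have hder1 : derivative F = X^(e+1) * (C ((e:ℂ)+2) * G + X * G') := by
    rw [hFG, derivative_mul, derivative_X_pow]
    push_cast
    ring
  have hder2 : derivative (derivative F) = X^e * (C (((e:ℂ)+2)*((e:ℂ)+1)) * G
      + C (2*((e:ℂ)+2)) * (X * G') + X^2 * G'') := by
    rw [hder1, derivative_mul, derivative_X_pow, derivative_add, derivative_mul,
      derivative_mul, derivative_C, derivative_X]
    push_cast
    simp only [map_add, map_mul, map_ofNat, map_one]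
    ring
  have hXP : X^(2*e+2) * P = C β * X ^ (d-2) := by
    rw [← hE, hder2, hder1, hFG, hP]
    ring
  have hdC : ((d:ℕ):ℂ) ≠ 0 := Nat.cast_ne_zero.mpr (by omega)
  -- trichotomy on exponents
  rcases lt_trichotomy (2*e+2) (d-2) with hlt | heqd | hgt
  · exfalso
    have h2 : X^(2*e+2) * (C β * X^(d-2-(2*e+2))) = C β * X^(d-2) := by
      rw [mul_left_comm, ← pow_add]
      congr 2
      omega
    have hPeq : P = C β * X^(d-2-(2*e+2)) :=
      mul_left_cancel₀ (pow_ne_zero _ (X_ne_zero : (X:ℂ[X]) ≠ 0)) (by rw [hXP, h2])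
    have hk : d-2-(2*e+2) ≠ 0 := by omega
    have h3 := congrArg (eval 0) hPeq
    simp only [hP, eval_mul, eval_add, eval_sub, eval_pow, eval_C, eval_X, zero_pow hk,
      mul_zero, zero_mul, add_zero, zero_add] at h3
    have h4 : (((e:ℂ)+2) - (d:ℂ)) * (((e:ℂ)+2) * eval 0 G ^ 2) = 0 := by linear_combination h3
    rcases mul_eq_zero.mp h4 with h5 | h5
    · have h6 : ((e+2 : ℕ) : ℂ) = ((d:ℕ) : ℂ) := by push_cast; linear_combination h5
      have : e + 2 = d := Nat.cast_injective h6
      omega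
    · rcases mul_eq_zero.mp h5 with h6 | h6
      · have : ((e+2 : ℕ):ℂ) = 0 := by push_cast; linear_combination h6
        exact (Nat.cast_ne_zero.mpr (by omega)) this
      · exact pow_ne_zero 2 hG0 h6
  swap
  · exfalso
    have h2 : X^(d-2) * (X^(2*e+2-(d-2)) * P) = X^(d-2) * C β := by
      rw [← mul_assoc, ← pow_add, show d-2+(2*e+2-(d-2)) = 2*e+2 from by omega, hXP,
        mul_comm]
    have hPeq := mul_left_cancel₀ (pow_ne_zero _ (X_ne_zero : (X:ℂ[X]) ≠ 0)) h2
    have hk : 2*e+2-(d-2) ≠ 0 := by omega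
    have h3 := congrArg (eval 0) hPeq
    simp only [eval_mul, eval_pow, eval_X, eval_C, zero_pow hk, zero_mul] at h3
    exact hβ h3.symm
  -- main case : d = 2e+4
  have hd4 : d = 2*e+4 := by omega
  have hPC : P = C β :=
    mul_left_cancel₀ (pow_ne_zero _ (X_ne_zero : (X:ℂ[X]) ≠ 0))
      (by rw [hXP, heqd, mul_comm])
  set c0 := eval 0 G with hc0
  have hCd : ((d:ℕ):ℂ) = 2*(e:ℂ)+4 := by rw [hd4]; push_cast; ring
  have hβval : β = -(((e:ℂ)+2)^2 * c0^2) := by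
    have h3 := congrArg (eval 0) hPC
    simp only [hP, eval_mul, eval_add, eval_sub, eval_pow, eval_C, eval_X,
      mul_zero, zero_mul, add_zero, zero_add, ← hc0] at h3
    rw [hCd] at h3
    linear_combination -h3
  by_cases hGdeg : G.natDegree = 0
  · obtain ⟨c, hc⟩ := Polynomial.natDegree_eq_zero.mp hGdeg
    refine ⟨c, ?_, ?_⟩
    · intro h
      apply hG0
      rw [hc0, ← hc, h]
      simp
    · rw [hFG, ← hc, show d/2 = e+2 from by omega]
      ring
  exfalso
  have hGdegne : G.degree ≠ 0 := by
    rw [Polynomial.degree_eq_natDegree hGne]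
    exact_mod_cast hGdeg
  obtain ⟨r, hr⟩ := IsAlgClosed.exists_root G hGdegne
  have hGr : eval r G = 0 := hr
  have hr0 : r ≠ 0 := by
    rintro rfl
    exact hG0 (by rw [hc0]; exact hGr)
  by_cases hmu : 2 ≤ rootMultiplicity r G
  · obtain ⟨q, hq⟩ := (Polynomial.le_rootMultiplicity_iff hGne).mp hmu
    have hG'r : eval r G' = 0 := by
      rw [hG', hq]
      simp [derivative_mul, derivative_pow]
    have h3 := congrArg (eval r) hPC
    simp only [hP, eval_mul, eval_add, eval_sub, eval_pow, eval_C, eval_X,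
      hGr, hG'r, mul_zero, zero_mul, add_zero, zero_add] at h3
    rw [hβval] at h3
    apply hG0
    have h4 : (((e:ℂ)+2) * c0)^2 = 0 := by linear_combination h3
    rw [hc0]
    have h5 := pow_eq_zero_iff (n := 2) (by omega) |>.mp h4
    rcases mul_eq_zero.mp h5 with h6 | h6
    · exfalso
      have hne : ((e+2:ℕ) : ℂ) ≠ 0 := Nat.cast_ne_zero.mpr (by omega)
      apply hne
      push_cast
      linear_combination h6
    · rw [← hc0]; exact h6
  -- simple root case
  have hmu1 : rootMultiplicity r G = 1 := by
    have := (Polynomial.rootMultiplicity_pos hGne).mpr hr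
    omega
  set Q : ℂ[X] := C (4*((d:ℂ)-1)) * (X^2 * G'^2) - C (((d:ℂ)-1)*(d:ℂ)^2) * G^2
      - C ((d:ℂ)^2*c0^2) with hQdef
  have hQd : derivative Q = C (4*((d:ℂ)-1)) * (C 2 * X * G'^2 + X^2 * (C 2 * G' * G''))
      - C (((d:ℂ)-1)*(d:ℂ)^2) * (C 2 * G * G') := by
    rw [hQdef]
    simp only [derivative_sub, derivative_mul, derivative_C, derivative_pow, derivative_X,
      ← hG'']
    push_cast
    ring
  have hCCd : (C ((d:ℕ):ℂ) : ℂ[X]) = 2 * C (e:ℂ) + 4 := by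
    rw [hCd]
    simp only [map_add, map_mul, map_ofNat]
  have hQid : C (d:ℂ) * G * derivative Q = C (2*(d:ℂ)-2) * G' * Q := by
    have key : P = C β := hPC
    rw [hP, hβval] at key
    simp only [map_mul, map_add, map_sub, map_neg, map_pow, map_ofNat, map_one] at key
    rw [hCCd] at key
    rw [hQd, hQdef]
    simp only [map_mul, map_add, map_sub, map_neg, map_pow, map_ofNat, map_one]
    rw [hCCd]
    linear_combination (8*((2 * C (e:ℂ) + 4)-1) * G') * key
  have hQ0 : Q.eval 0 = -(d:ℂ)^3 * c0^2 := by
    rw [hQdef]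
    simp only [eval_sub, eval_mul, eval_pow, eval_C, eval_X, ← hc0]
    ring
  have hQne : Q ≠ 0 := by
    intro h
    rw [h, eval_zero] at hQ0
    have h4 : ((d:ℂ))^3 * c0^2 = 0 := by linear_combination hQ0
    rcases mul_eq_zero.mp h4 with h5 | h5
    · exact pow_ne_zero 3 hdC h5
    · exact pow_ne_zero 2 hG0 h5
  obtain ⟨B, hB, hBnd⟩ := G.exists_eq_pow_rootMultiplicity_mul_and_not_dvd hGne r
  rw [hmu1, pow_one] at hB
  have hBr : eval r B ≠ 0 := fun h => hBnd (Polynomial.dvd_iff_isRoot.mpr h)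
  have hGd : derivative G = B + (X - C r) * derivative B := by
    rw [hB, derivative_mul]
    simp
  have hG'rne : eval r G' ≠ 0 := by
    rw [hG', hGd]
    simpa using hBr
  have h2dne : (2*(d:ℂ)-2) ≠ 0 := by
    intro h
    have h4 : ((d:ℕ):ℂ) = ((1:ℕ):ℂ) := by push_cast; linear_combination h/2
    have := Nat.cast_injective h4
    omega
  have hQr : eval r Q = 0 := by
    have h3 := congrArg (eval r) hQid
    simp only [eval_mul, eval_C, hGr, mul_zero, zero_mul] at h3
    rcases mul_eq_zero.mp h3.symm with h | h
    · rcases mul_eq_zero.mp h with h' | h'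
      · exact absurd h' h2dne
      · exact absurd h' hG'rne
    · exact h
  have hν1 : 1 ≤ rootMultiplicity r Q := (Polynomial.rootMultiplicity_pos hQne).mpr hQr
  obtain ⟨A, hA, hAnd⟩ := Q.exists_eq_pow_rootMultiplicity_mul_and_not_dvd hQne r
  obtain ⟨w, hw⟩ : ∃ w, rootMultiplicity r Q = w + 1 := ⟨rootMultiplicity r Q - 1, by omega⟩
  rw [hw] at hA
  have hAr : eval r A ≠ 0 := fun h => hAnd (Polynomial.dvd_iff_isRoot.mpr h)
  have hQd2 : derivative Q = (X - C r)^w * (C ((w:ℂ)+1) * A + (X - C r) * derivative A) := by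
    rw [hA]
    simp only [derivative_mul, derivative_pow, derivative_sub, derivative_X, derivative_C]
    push_cast
    ring
  have e1 : C (d:ℂ) * G * derivative Q
      = (X - C r)^(w+1) * (C (d:ℂ) * B * (C ((w:ℂ)+1) * A + (X - C r) * derivative A)) := by
    rw [hB, hQd2]
    ring
  have e2 : C (2*(d:ℂ)-2) * G' * Q
      = (X - C r)^(w+1) * (C (2*(d:ℂ)-2) * (B + (X - C r) * derivative B) * A) := by
    rw [hG', hGd, hA]
    ring
  rw [e1, e2] at hQid
  have hcc := mul_left_cancel₀ (pow_ne_zero (w+1) (Polynomial.X_sub_C_ne_zero r)) hQid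
  have h4 := congrArg (eval r) hcc
  simp only [eval_mul, eval_add, eval_sub, eval_pow, eval_C, eval_X, sub_self, zero_mul,
    mul_zero, add_zero, zero_add] at h4
  have h5 : ((d:ℂ) * ((w:ℂ)+1)) * (eval r B * eval r A)
      = (2*(d:ℂ)-2) * (eval r B * eval r A) := by linear_combination h4
  have h6 : (d:ℂ) * ((w:ℂ)+1) = 2*(d:ℂ)-2 := mul_right_cancel₀ (mul_ne_zero hBr hAr) h5
  have h7 : d*(w+1) = 2*d-2 := by
    have h6' : ((d*(w+1):ℕ):ℂ) = ((2*d-2:ℕ):ℂ) := by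
      rw [Nat.cast_sub (by omega)]
      push_cast
      linear_combination h6
    exact_mod_cast h6'
  rcases Nat.eq_zero_or_pos w with rfl | hw1
  · simp at h7
    omega
  · have h9 : 2*d ≤ d*(w+1) := by nlinarith
    omega

end OneVar

open MvPolynomial

/-- The Hessian determinant of a multivariate polynomial. -/
noncomputable def hessDet {n : ℕ} (f : MvPolynomial (Fin n) ℂ) : MvPolynomial (Fin n) ℂ :=
  Matrix.det (Matrix.of fun i j => pderiv i (pderiv j f))

lemma hom_deg {f : MvPolynomial (Fin 2) ℂ} {d : ℕ} (hf : f.IsHomogeneous d)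
    {u : Fin 2 →₀ ℕ} (hu : coeff u f ≠ 0) : u 0 + u 1 = d := by
  have h := hf hu
  rw [← h]
  simp [Finsupp.weight_apply, Finsupp.sum_fintype, Fin.sum_univ_two]

lemma X_mul_mono (u : Fin 2 →₀ ℕ) (c : ℂ) (i : Fin 2) :
    (X i : MvPolynomial (Fin 2) ℂ) * monomial (u - Finsupp.single i 1) (c * u i)
      = monomial u (c * u i) := by
  by_cases h : u i = 0
  · simp [h]
  · rw [show (X i : MvPolynomial (Fin 2) ℂ) = monomial (Finsupp.single i 1) 1 by
      rw [← X_pow_eq_monomial, pow_one], monomial_mul, one_mul]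
    have hfs : Finsupp.single i 1 + (u - Finsupp.single i 1) = u := by
      ext j
      rcases eq_or_ne j i with rfl | hij
      · simp only [Finsupp.add_apply, Finsupp.tsub_apply, Finsupp.single_eq_same]
        omega
      · simp [Finsupp.add_apply, Finsupp.tsub_apply, Finsupp.single_eq_of_ne' (Ne.symm hij)]
    rw [hfs]

lemma euler {f : MvPolynomial (Fin 2) ℂ} {d : ℕ} (hf : f.IsHomogeneous d) :
    X 0 * pderiv 0 f + X 1 * pderiv 1 f = C (d:ℂ) * f := by
  conv_lhs => rw [f.as_sum]
  conv_rhs => rw [f.as_sum]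
  rw [map_sum (pderiv 0), map_sum (pderiv 1), Finset.mul_sum, Finset.mul_sum, Finset.mul_sum,
    ← Finset.sum_add_distrib]
  refine Finset.sum_congr rfl fun u hu => ?_
  have hud : u 0 + u 1 = d := hom_deg hf (mem_support_iff.mp hu)
  rw [pderiv_monomial, pderiv_monomial, X_mul_mono, X_mul_mono, C_mul_monomial,
    ← map_add (monomial u)]
  congr 1
  rw [← hud]
  push_cast
  ring

/-- Dehomogenization at `x₁ = t, x₂ = b`. -/
noncomputable def Tb (b : ℂ) : MvPolynomial (Fin 2) ℂ →ₐ[ℂ] Polynomial ℂ :=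
  aeval ![Polynomial.X, Polynomial.C b]

lemma Tb_X0 (b : ℂ) : Tb b (X 0) = Polynomial.X := by simp [Tb]

lemma Tb_X1 (b : ℂ) : Tb b (X 1) = Polynomial.C b := by simp [Tb]

lemma Tb_C (b c : ℂ) : Tb b (C c) = Polynomial.C c := by simp [Tb]

lemma Tb_pderiv (b : ℂ) (f : MvPolynomial (Fin 2) ℂ) :
    Tb b (pderiv 0 f) = Polynomial.derivative (Tb b f) := by
  induction f using MvPolynomial.induction_on with
  | C a => simp [Tb]
  | add p q hp hq => simp [map_add, hp, hq]
  | mul_X p i hp =>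
    rw [pderiv_mul, map_add, map_mul, map_mul, hp, map_mul, Polynomial.derivative_mul]
    congr 1
    fin_cases i <;> simp [Tb]

lemma eval_Tb (b t : ℂ) (f : MvPolynomial (Fin 2) ℂ) :
    (Tb b f).eval t = eval ![t, b] f := by
  induction f using MvPolynomial.induction_on with
  | C a => simp [Tb]
  | add p q hp hq => simp [map_add, hp, hq]
  | mul_X p i hp =>
    rw [map_mul, Polynomial.eval_mul, hp, map_mul]
    congr 1
    fin_cases i
    · simp [Tb]
    · simp [Tb]

lemma pderiv_pderiv_comm (i j : Fin 2) (f : MvPolynomial (Fin 2) ℂ) :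
    pderiv i (pderiv j f) = pderiv j (pderiv i f) := by
  have hXc : ∀ (i j k : Fin 2), pderiv i (pderiv j (X k : MvPolynomial (Fin 2) ℂ)) = 0 := by
    intro i j k
    rcases eq_or_ne k j with rfl | h
    · rw [pderiv_X_self, pderiv_one]
    · rw [pderiv_X_of_ne h, map_zero]
  induction f using MvPolynomial.induction_on with
  | C a => simp
  | add p q hp hq => simp [map_add, hp, hq]
  | mul_X p k hp =>
    simp only [pderiv_mul, map_add, pderiv_mul, hXc, mul_zero, add_zero, hp]
    ring

lemma hom_eval_smul {f : MvPolynomial (Fin 2) ℂ} {d : ℕ} (hf : f.IsHomogeneous d)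
    (c : ℂ) (x : Fin 2 → ℂ) : eval (c • x) f = c ^ d * eval x f := by
  rw [eval_eq', eval_eq', Finset.mul_sum]
  refine Finset.sum_congr rfl fun u hu => ?_
  have hud : u 0 + u 1 = d := hom_deg hf (mem_support_iff.mp hu)
  rw [Fin.prod_univ_two, Fin.prod_univ_two]
  simp only [Pi.smul_apply, smul_eq_mul]
  rw [← hud]
  ring

/-- Dehomogenization in the other variable. -/
noncomputable def Sz (z : ℂ) : MvPolynomial (Fin 2) ℂ →ₐ[ℂ] Polynomial ℂ :=
  aeval ![Polynomial.C z, Polynomial.X]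

lemma eval_Sz (z t : ℂ) (f : MvPolynomial (Fin 2) ℂ) :
    (Sz z f).eval t = eval ![z, t] f := by
  induction f using MvPolynomial.induction_on with
  | C a => simp [Sz]
  | add p q hp hq => simp [map_add, hp, hq]
  | mul_X p i hp =>
    rw [map_mul, Polynomial.eval_mul, hp, map_mul]
    congr 1
    fin_cases i
    · simp [Sz]
    · simp [Sz]

lemma Tb_inj {d : ℕ} {b : ℂ} (hb : b ≠ 0) {p q : MvPolynomial (Fin 2) ℂ}
    (hp : p.IsHomogeneous d) (hq : q.IsHomogeneous d) (h : Tb b p = Tb b q) : p = q := by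
  have hline : ∀ z w : ℂ, w ≠ 0 → eval ![z, w] p = eval ![z, w] q := by
    intro z w hw
    have hv : ![z, w] = (w/b) • ![z*b/w, b] := by
      funext i
      fin_cases i
      · show z = w / b * (z * b / w)
        field_simp
      · show w = w / b * b
        field_simp
    rw [hv, hom_eval_smul hp, hom_eval_smul hq, ← eval_Tb b (z*b/w) p, ← eval_Tb b (z*b/w) q, h]
  apply MvPolynomial.funext
  intro x
  have hx : x = ![x 0, x 1] := by
    funext i
    fin_cases i <;> rfl
  rw [hx]
  rcases eq_or_ne (x 1) 0 with h1 | h1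
  · rw [h1]
    have hS : Sz (x 0) p - Sz (x 0) q = 0 := by
      apply Polynomial.eq_zero_of_infinite_isRoot
      apply Set.Infinite.mono (s := {w : ℂ | w ≠ 0})
      · intro w hw
        simp only [Set.mem_setOf_eq, Polynomial.IsRoot, Polynomial.eval_sub, eval_Sz]
        rw [hline _ _ hw, sub_self]
      · have h3 : ({0} : Set ℂ)ᶜ.Infinite := (Set.finite_singleton 0).infinite_compl
        convert h3 using 1
        ext w; simp
    have h2 := congrArg (Polynomial.eval 0) hS
    simp only [Polynomial.eval_sub, Polynomial.eval_zero, eval_Sz] at h2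
    exact sub_eq_zero.mp h2
  · exact hline _ _ h1

lemma key (d : ℕ) (hd : 4 ≤ d) (heven : Even d) (f : MvPolynomial (Fin 2) ℂ)
    (hf : f.IsHomogeneous d) (α : ℂ) (hα : α ≠ 0)
    (hH : hessDet f = C α * (X 0 * X 1) ^ (d - 2))
    (b : ℂ) (hb : b ≠ 0) (h0 : eval ![0, b] (pderiv 0 f) = 0)
    (h1 : eval ![0, b] (pderiv 1 f) = 0) :
    ∃ a : ℂ, a ≠ 0 ∧ f = C a * (X 0 ^ (d / 2) * X 1 ^ (d / 2)) := by
  have hdC : ((d:ℕ):ℂ) ≠ 0 := Nat.cast_ne_zero.mpr (by omega)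
  have hd1 : ((d:ℂ) - 1) ≠ 0 := by
    intro h
    have h4 : ((d:ℕ):ℂ) = ((1:ℕ):ℂ) := by push_cast; linear_combination h
    have := Nat.cast_injective h4
    omega
  have hE := euler hf
  -- transfer Euler
  have hTbE : Polynomial.X * Polynomial.derivative (Tb b f) + Polynomial.C b * Tb b (pderiv 1 f)
      = Polynomial.C (d:ℂ) * Tb b f := by
    have h2 := congrArg (Tb b) hE
    simpa only [map_add, map_mul, Tb_X0, Tb_X1, Tb_C, Tb_pderiv] using h2
  have hCbY : Polynomial.C b * Tb b (pderiv 1 f)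
      = Polynomial.C (d:ℂ) * Tb b f - Polynomial.X * Polynomial.derivative (Tb b f) := by
    linear_combination hTbE
  have hCbY' : Polynomial.C b * Polynomial.derivative (Tb b (pderiv 1 f))
      = Polynomial.C (d:ℂ) * Polynomial.derivative (Tb b f)
        - (Polynomial.derivative (Tb b f)
          + Polynomial.X * Polynomial.derivative (Polynomial.derivative (Tb b f))) := by
    have h2 := congrArg Polynomial.derivative hCbY
    simpa only [Polynomial.derivative_mul, Polynomial.derivative_sub, Polynomial.derivative_C,
      Polynomial.derivative_X, zero_mul, zero_add, one_mul] using h2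
  -- second Euler identity
  have hE1 : pderiv 1 f + (X 0 * pderiv 1 (pderiv 0 f) + X 1 * pderiv 1 (pderiv 1 f))
      = C (d:ℂ) * pderiv 1 f := by
    have h2 := congrArg (pderiv 1) hE
    rw [map_add, pderiv_mul, pderiv_mul, pderiv_C_mul,
      pderiv_X_of_ne (show (0:Fin 2) ≠ 1 by decide), pderiv_X_self] at h2
    linear_combination h2
  rw [pderiv_pderiv_comm 1 0 f] at hE1
  have hZ : Polynomial.C b * Tb b (pderiv 1 (pderiv 1 f))
      = Polynomial.C (d:ℂ) * Tb b (pderiv 1 f) - Tb b (pderiv 1 f)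
        - Polynomial.X * Polynomial.derivative (Tb b (pderiv 1 f)) := by
    have h2 := congrArg (Tb b) hE1
    simp only [map_add, map_mul, Tb_X0, Tb_X1, Tb_C, Tb_pderiv] at h2
    linear_combination h2
  -- the Hessian in explicit form
  have hhd : hessDet f = pderiv 0 (pderiv 0 f) * pderiv 1 (pderiv 1 f)
      - pderiv 0 (pderiv 1 f) * pderiv 1 (pderiv 0 f) := by
    rw [hessDet, Matrix.det_fin_two]
    simp [Matrix.of_apply]
  obtain ⟨k, hk⟩ : ∃ k, d = k + 2 := ⟨d - 2, by omega⟩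
  have hkd : d - 2 = k := by omega
  have hTbH := congrArg (Tb b) hH
  rw [hhd, pderiv_pderiv_comm 1 0 f, hkd] at hTbH
  simp only [map_sub, map_mul, map_pow, Tb_pderiv, Tb_X0, Tb_X1, Tb_C] at hTbH
  -- assembled one-variable equation
  set β : ℂ := α * b^(k+2) / ((d:ℂ)-1) with hβdef
  have hβ : β ≠ 0 := div_ne_zero (mul_ne_zero hα (pow_ne_zero _ hb)) hd1
  have hEq : Polynomial.C (d:ℂ) * Polynomial.C ((d:ℂ)-1)
        * (Tb b f * Polynomial.derivative (Polynomial.derivative (Tb b f)))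
      - Polynomial.C ((d:ℂ)-1) * Polynomial.C ((d:ℂ)-1) * (Polynomial.derivative (Tb b f))^2
      = Polynomial.C α * Polynomial.C b ^ (k+2) * Polynomial.X ^ k := by
    simp only [map_sub, map_one] at *
    linear_combination (Polynomial.C b^2) * hTbH
      + (- Polynomial.C b * Polynomial.derivative (Polynomial.derivative (Tb b f))) * hZ
      + (- (Polynomial.C (d:ℂ) - 1) * Polynomial.derivative (Polynomial.derivative (Tb b f))) * hCbY
      + (Polynomial.C b * Polynomial.derivative (Tb b (pderiv 1 f))
          + (Polynomial.C (d:ℂ) - 1) * Polynomial.derivative (Tb b f)) * hCbY'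
  have hsc : ((d:ℂ)-1) * β = α * b^(k+2) := by
    rw [hβdef]
    field_simp
  have hCβ : (Polynomial.C ((d:ℂ)-1) : Polynomial ℂ) * Polynomial.C β
      = Polynomial.C α * Polynomial.C b ^ (k+2) := by
    rw [← map_mul, hsc, map_mul, map_pow]
  have hEq2 : Polynomial.C (d:ℂ) * (Tb b f * Polynomial.derivative (Polynomial.derivative (Tb b f)))
      - Polynomial.C ((d:ℂ)-1) * (Polynomial.derivative (Tb b f))^2
      = Polynomial.C β * Polynomial.X ^ (d-2) := by
    apply mul_left_cancel₀ (show (Polynomial.C ((d:ℂ)-1) : Polynomial ℂ) ≠ 0 from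
      Polynomial.C_ne_zero.mpr hd1)
    rw [hkd]
    simp only [map_sub, map_one] at *
    linear_combination hEq - Polynomial.X^k * hCβ
  -- coefficient conditions
  have hf0 : Polynomial.eval 0 (Tb b f) = 0 := by
    have h2 := congrArg (eval ![0, b]) hE
    simp only [map_add, map_mul, eval_X, eval_C, h0, h1, mul_zero, add_zero] at h2
    rw [eval_Tb]
    rcases mul_eq_zero.mp h2.symm with h3 | h3
    · exact absurd h3 hdC
    · exact h3
  have hc0 : (Tb b f).coeff 0 = 0 := by rw [Polynomial.coeff_zero_eq_eval_zero]; exact hf0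
  have hc1 : (Tb b f).coeff 1 = 0 := by
    have h2 : Polynomial.eval 0 (Polynomial.derivative (Tb b f)) = 0 := by
      rw [← Tb_pderiv, eval_Tb]
      exact h0
    rw [← Polynomial.coeff_zero_eq_eval_zero] at h2
    rw [Polynomial.coeff_derivative] at h2
    simpa using h2
  obtain ⟨a, ha, hFa⟩ := poly_main d hd (Tb b f) β hβ hEq2 hc0 hc1
  -- reconstruction
  obtain ⟨t, ht⟩ := heven
  have hm : d / 2 = t := by omega
  have hmm : 1 * t + 1 * t = d := by omega
  have hgh : (C (a / b^t) * (X 0 ^ t * X 1 ^ t) : MvPolynomial (Fin 2) ℂ).IsHomogeneous d := by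
    apply MvPolynomial.IsHomogeneous.C_mul
    exact hmm ▸ ((isHomogeneous_X ℂ 0).pow t).mul ((isHomogeneous_X ℂ 1).pow t)
  have hbt : a / b^t * b^t = a := div_mul_cancel₀ a (pow_ne_zero t hb)
  have hTbg : Tb b (C (a/b^t) * (X 0^t * X 1^t)) = Polynomial.C a * Polynomial.X ^ t := by
    rw [map_mul, map_mul, map_pow, map_pow, Tb_X0, Tb_X1, Tb_C, ← map_pow]
    have h3 : (Polynomial.C (a / b^t) : Polynomial ℂ) * Polynomial.C (b^t) = Polynomial.C a := by
      rw [← map_mul, hbt]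
    linear_combination (Polynomial.X^t) * h3
  have hfeq : Tb b f = Tb b (C (a/b^t) * (X 0^t * X 1^t)) := by
    rw [hTbg, hFa, hm]
  refine ⟨a / b^t, div_ne_zero ha (pow_ne_zero _ hb), ?_⟩
  rw [hm]
  exact Tb_inj hb hf hgh hfeq

lemma hess_expand (g : MvPolynomial (Fin 2) ℂ) :
    hessDet g = pderiv 0 (pderiv 0 g) * pderiv 1 (pderiv 1 g)
      - pderiv 0 (pderiv 1 g) * pderiv 1 (pderiv 0 g) := by
  rw [hessDet, Matrix.det_fin_two]
  simp [Matrix.of_apply]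

/-- For even `d ≥ 4`, the only singular homogeneous binary polynomials `f` of degree `d`
with `H(f) = α·(x_1x_2)^{d-2}`, `α ≠ 0`, are `f = a·x_1^{d/2}x_2^{d/2}` with `a ≠ 0`. -/
theorem singular_binary_even (d : ℕ) (hd : 4 ≤ d) (heven : Even d)
    (f : MvPolynomial (Fin 2) ℂ) (hf : f.IsHomogeneous d)
    (α : ℂ) (hα : α ≠ 0) (hH : hessDet f = C α * (X 0 * X 1) ^ (d - 2))
    (hsing : ∃ p : Fin 2 → ℂ, p ≠ 0 ∧ ∀ i, eval p (pderiv i f) = 0) :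
    ∃ a : ℂ, a ≠ 0 ∧ f = C a * (X 0 ^ (d / 2) * X 1 ^ (d / 2)) := by
  obtain ⟨p, hp, hpd⟩ := hsing
  have hE := euler hf
  have hE0 : pderiv 0 f + (X 0 * pderiv 0 (pderiv 0 f) + X 1 * pderiv 0 (pderiv 1 f))
      = C (d:ℂ) * pderiv 0 f := by
    have h2 := congrArg (pderiv 0) hE
    rw [map_add, pderiv_mul, pderiv_mul, pderiv_C_mul, pderiv_X_self,
      pderiv_X_of_ne (show (1:Fin 2) ≠ 0 by decide)] at h2
    linear_combination h2
  have hE1 : pderiv 1 f + (X 0 * pderiv 1 (pderiv 0 f) + X 1 * pderiv 1 (pderiv 1 f))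
      = C (d:ℂ) * pderiv 1 f := by
    have h2 := congrArg (pderiv 1) hE
    rw [map_add, pderiv_mul, pderiv_mul, pderiv_C_mul,
      pderiv_X_of_ne (show (0:Fin 2) ≠ 1 by decide), pderiv_X_self] at h2
    linear_combination h2
  have he0 := congrArg (eval p) hE0
  have he1 := congrArg (eval p) hE1
  simp only [map_add, map_mul, eval_X, eval_C, hpd 0, hpd 1, mul_zero, zero_add,
    add_zero] at he0 he1
  have hOr : p 0 ≠ 0 ∨ p 1 ≠ 0 := by
    by_contra hcon
    push_neg at hcon
    apply hp
    funext i
    fin_cases i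
    · exact hcon.1
    · exact hcon.2
  have hdet0 : eval p (hessDet f) = 0 := by
    rw [hess_expand]
    simp only [map_sub, map_mul]
    rcases hOr with hp0 | hp1
    · have h3 : p 0 * (eval p (pderiv 0 (pderiv 0 f)) * eval p (pderiv 1 (pderiv 1 f))
          - eval p (pderiv 0 (pderiv 1 f)) * eval p (pderiv 1 (pderiv 0 f))) = 0 := by
        linear_combination eval p (pderiv 1 (pderiv 1 f)) * he0
          - eval p (pderiv 0 (pderiv 1 f)) * he1
      exact (mul_eq_zero.mp h3).resolve_left hp0
    · have h3 : p 1 * (eval p (pderiv 0 (pderiv 0 f)) * eval p (pderiv 1 (pderiv 1 f))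
          - eval p (pderiv 0 (pderiv 1 f)) * eval p (pderiv 1 (pderiv 0 f))) = 0 := by
        linear_combination eval p (pderiv 0 (pderiv 0 f)) * he1
          - eval p (pderiv 1 (pderiv 0 f)) * he0
      exact (mul_eq_zero.mp h3).resolve_left hp1
  have hp01 : p 0 * p 1 = 0 := by
    rw [hH] at hdet0
    simp only [map_mul, map_pow, eval_C, eval_X] at hdet0
    rcases mul_eq_zero.mp hdet0 with h | h
    · exact absurd h hα
    · exact pow_eq_zero_iff (show d - 2 ≠ 0 by omega) |>.mp h
  rcases mul_eq_zero.mp hp01 with h00 | h10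
  · have hb : p 1 ≠ 0 := hOr.resolve_left (by simp [h00])
    have hveq : ![0, p 1] = p := by
      funext i
      fin_cases i
      · exact h00.symm
      · rfl
    exact key d hd heven f hf α hα hH (p 1) hb (by rw [hveq]; exact hpd 0)
      (by rw [hveq]; exact hpd 1)
  · have hb : p 0 ≠ 0 := hOr.resolve_right (by simp [h10])
    have hσ0 : Equiv.swap (0:Fin 2) 1 0 = 1 := Equiv.swap_apply_left 0 1
    have hσ1 : Equiv.swap (0:Fin 2) 1 1 = 0 := Equiv.swap_apply_right 0 1
    have hσinj : Function.Injective ⇑(Equiv.swap (0:Fin 2) 1) := (Equiv.swap 0 1).injective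
    have hren : ∀ (x : Fin 2) (h : MvPolynomial (Fin 2) ℂ),
        pderiv (Equiv.swap (0:Fin 2) 1 x) (rename (⇑(Equiv.swap (0:Fin 2) 1)) h)
          = rename (⇑(Equiv.swap (0:Fin 2) 1)) (pderiv x h) :=
      pderiv_rename hσinj
    have hgh : (rename (⇑(Equiv.swap (0:Fin 2) 1)) f).IsHomogeneous d := hf.rename_isHomogeneous
    have hgen : ∀ (x : Fin 2) (h : MvPolynomial (Fin 2) ℂ),
        pderiv (![1, 0] x) (rename (⇑(Equiv.swap (0:Fin 2) 1)) h)
          = rename (⇑(Equiv.swap (0:Fin 2) 1)) (pderiv x h) := by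
      intro x h
      have h2 := hren x h
      have h3 : Equiv.swap (0:Fin 2) 1 x = ![1, 0] x := by
        fin_cases x <;> rfl
      rwa [h3] at h2
    have hg00 : pderiv 0 (rename (⇑(Equiv.swap (0:Fin 2) 1)) f)
        = rename (⇑(Equiv.swap (0:Fin 2) 1)) (pderiv 1 f) := hgen 1 f
    have hg11 : pderiv 1 (rename (⇑(Equiv.swap (0:Fin 2) 1)) f)
        = rename (⇑(Equiv.swap (0:Fin 2) 1)) (pderiv 0 f) := hgen 0 f
    have hgH : hessDet (rename (⇑(Equiv.swap (0:Fin 2) 1)) f) = C α * (X 0 * X 1) ^ (d - 2) := by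
      have hswap : hessDet (rename (⇑(Equiv.swap (0:Fin 2) 1)) f)
          = rename (⇑(Equiv.swap (0:Fin 2) 1)) (hessDet f) := by
        rw [hess_expand f, map_sub, map_mul, map_mul, hess_expand, hg00, hg11]
        have hgA : pderiv 0 (rename (⇑(Equiv.swap (0:Fin 2) 1)) (pderiv 1 f))
            = rename (⇑(Equiv.swap (0:Fin 2) 1)) (pderiv 1 (pderiv 1 f)) := hgen 1 (pderiv 1 f)
        have hgB : pderiv 1 (rename (⇑(Equiv.swap (0:Fin 2) 1)) (pderiv 1 f))
            = rename (⇑(Equiv.swap (0:Fin 2) 1)) (pderiv 0 (pderiv 1 f)) := hgen 0 (pderiv 1 f)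
        have hgC : pderiv 0 (rename (⇑(Equiv.swap (0:Fin 2) 1)) (pderiv 0 f))
            = rename (⇑(Equiv.swap (0:Fin 2) 1)) (pderiv 1 (pderiv 0 f)) := hgen 1 (pderiv 0 f)
        have hgD : pderiv 1 (rename (⇑(Equiv.swap (0:Fin 2) 1)) (pderiv 0 f))
            = rename (⇑(Equiv.swap (0:Fin 2) 1)) (pderiv 0 (pderiv 0 f)) := hgen 0 (pderiv 0 f)
        rw [hgA, hgB, hgC, hgD]
        ring
      rw [hswap, hH, map_mul, map_pow, map_mul, rename_C, rename_X, rename_X, hσ0, hσ1]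
      ring
    have hcomp : (![0, p 0] ∘ ⇑(Equiv.swap (0:Fin 2) 1)) = p := by
      funext i
      fin_cases i
      · show ![0, p 0] (Equiv.swap (0:Fin 2) 1 0) = p 0
        rw [hσ0]
        rfl
      · show ![0, p 0] (Equiv.swap (0:Fin 2) 1 1) = p 1
        rw [hσ1]
        exact h10.symm
    have hs0 : eval ![0, p 0] (pderiv 0 (rename (⇑(Equiv.swap (0:Fin 2) 1)) f)) = 0 := by
      rw [hg00, eval_rename, hcomp]
      exact hpd 1
    have hs1 : eval ![0, p 0] (pderiv 1 (rename (⇑(Equiv.swap (0:Fin 2) 1)) f)) = 0 := by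
      rw [hg11, eval_rename, hcomp]
      exact hpd 0
    obtain ⟨a, ha, hga⟩ := key d hd heven _ hgh α hα hgH (p 0) hb hs0 hs1
    have hinv : rename (⇑(Equiv.swap (0:Fin 2) 1)) (rename (⇑(Equiv.swap (0:Fin 2) 1)) f) = f := by
      rw [rename_rename]
      have hid : (⇑(Equiv.swap (0:Fin 2) 1) ∘ ⇑(Equiv.swap (0:Fin 2) 1)) = id := by
        funext i
        simp [Equiv.swap_apply_self]
      rw [hid, rename_id]
      rfl
    refine ⟨a, ha, ?_⟩
    rw [← hinv, hga, map_mul, map_mul, map_pow, map_pow, rename_C, rename_X, rename_X, hσ0, hσ1]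
    ring
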